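/- Let 𝒫 = {(a₂₁, tr A, det A) ∈ ℂ³ : A = [aᵢⱼ] is a 2×2 complex matrix with operator norm ‖A‖ < 1} (the pentablock). Then for all z, w ∈ ℂ with |z| < 1 and |w| < 1, the point (z, 0, w) belongs to 𝒫; that is, {(z, 0, w) : (z,w) ∈ 𝔻²} ⊆ 𝒫. -/

import Mathlib

/-- The pentablock: the image of the open unit ball (operator norm) of `2 × 2` complex
matrices under `A ↦ (a₂₁, tr A, det A)`. -/
noncomputable def pentablock : Set (ℂ × ℂ × ℂ) :=
  {x | ∃ A : Matrix (Fin 2) (Fin 2) ℂ,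
    ‖Matrix.toEuclideanCLM (𝕜 := ℂ) (n := Fin 2) A‖ < 1 ∧
    x = (A 1 0, Matrix.trace A, Matrix.det A)}

open Matrix Complex in
lemma pentablock_helper {A : Matrix (Fin 2) (Fin 2) ℂ} {c : ℝ} (hc : 0 ≤ c)
    (h : ∀ u v : ℂ, ‖A 0 0 * u + A 0 1 * v‖ ^ 2
        + ‖A 1 0 * u + A 1 1 * v‖ ^ 2
        ≤ c ^ 2 * (‖u‖ ^ 2 + ‖v‖ ^ 2)) :
    ‖Matrix.toEuclideanCLM (𝕜 := ℂ) (n := Fin 2) A‖ ≤ c := by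
  refine ContinuousLinearMap.opNorm_le_bound _ hc fun x => ?_
  have hx : Matrix.toEuclideanCLM (𝕜 := ℂ) (n := Fin 2) A x
      = (WithLp.equiv 2 (Fin 2 → ℂ)).symm (A *ᵥ (WithLp.equiv 2 (Fin 2 → ℂ) x)) := rfl
  rw [hx, EuclideanSpace.norm_eq, EuclideanSpace.norm_eq]
  have key : ∑ i, ‖(WithLp.equiv 2 (Fin 2 → ℂ)).symm (A *ᵥ (WithLp.equiv 2 (Fin 2 → ℂ) x)) i‖ ^ 2
      ≤ c ^ 2 * ∑ i, ‖x i‖ ^ 2 := by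
    simp only [WithLp.equiv_symm_apply, PiLp.toLp_apply, Fin.sum_univ_two, Matrix.mulVec, dotProduct,
      Fin.sum_univ_two]
    exact h (x 0) (x 1)
  calc Real.sqrt (∑ i, ‖(WithLp.equiv 2 (Fin 2 → ℂ)).symm (A *ᵥ (WithLp.equiv 2 (Fin 2 → ℂ) x)) i‖ ^ 2)
      ≤ Real.sqrt (c ^ 2 * ∑ i, ‖x i‖ ^ 2) := Real.sqrt_le_sqrt key
    _ = c * Real.sqrt (∑ i, ‖x i‖ ^ 2) := by
        rw [Real.sqrt_mul (sq_nonneg c), Real.sqrt_sq hc]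

/-- For all `z, w` in the open unit disc, the point `(z, 0, w)` belongs to the pentablock. -/
theorem statement16 : ∀ z w : ℂ, ‖z‖ < 1 → ‖w‖ < 1 →
    (z, 0, w) ∈ pentablock := by
  intro z w hz hw
  by_cases hB : ‖w‖ < ‖z‖ ^ 2
  · -- case B : matrix !![0, -w/z; z, 0]
    have hz0 : 0 < ‖z‖ := by
      rcases eq_or_lt_of_le (norm_nonneg z) with h | h
      · rw [← h] at hB; simp at hB; exact absurd hB (norm_nonneg w).not_gt
      · exact h
    have hzne : z ≠ 0 := by simpa using hz0.ne'
    have hbv : ‖-w/z‖ ≤ ‖z‖ := by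
      rw [norm_div, norm_neg, div_le_iff₀ hz0]
      nlinarith [hB, norm_nonneg w]
    refine ⟨!![0, -w/z; z, 0], ?_, ?_⟩
    · refine lt_of_le_of_lt (pentablock_helper hz0.le fun u v => ?_) hz
      have e00 : !![0, -w/z; z, 0] 0 0 = 0 := rfl
      have e01 : !![0, -w/z; z, 0] 0 1 = -w/z := rfl
      have e10 : !![0, -w/z; z, 0] 1 0 = z := rfl
      have e11 : !![0, -w/z; z, 0] 1 1 = 0 := rfl
      rw [e00, e01, e10, e11]
      simp only [zero_mul, zero_add, add_zero, mul_zero, norm_mul]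
      have h1 : ‖-w/z‖ ^ 2 ≤ ‖z‖ ^ 2 :=
        pow_le_pow_left₀ (norm_nonneg _) hbv 2
      nlinarith [mul_le_mul_of_nonneg_right h1 (sq_nonneg (‖v‖))]
    · have hdet : Matrix.det !![0, -w/z; z, 0] = w := by
        rw [Matrix.det_fin_two_of]
        field_simp
        ring
      have htr : Matrix.trace !![0, -w/z; z, 0] = 0 := by
        rw [Matrix.trace_fin_two_of]; ring
      simp [hdet, htr]
  · -- case A : |z|^2 ≤ |w|
    push_neg at hB
    by_cases hw0 : w = 0
    · have hz0 : z = 0 := by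
        rw [hw0] at hB; simp at hB
        have h0 : ‖z‖ = 0 := by simp [hB]
        simpa using h0
      refine ⟨0, ?_, ?_⟩
      · simp only [map_zero, norm_zero]; norm_num
      · simp [hz0, hw0]
    · set ρ : ℝ := ‖w‖ with hρdef
      set r2 : ℝ := ‖z‖ ^ 2 with hr2def
      clear_value ρ r2
      have hA : r2 ≤ ρ := hB
      have hρ : 0 < ρ := by rw [hρdef]; simpa using hw0
      have hρc : (ρ:ℂ) ≠ 0 := by exact_mod_cast hρ.ne'
      obtain ⟨a, ha⟩ : ∃ a : ℂ, a ^ 2 = -(((ρ - r2)/ρ : ℝ) : ℂ) * w :=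
        IsAlgClosed.exists_pow_nat_eq _ (by norm_num)
      obtain ⟨b, hbdef⟩ : ∃ b : ℂ, b = -(w/(ρ:ℂ)) * (starRingEnd ℂ) z := ⟨_, rfl⟩
      have habs : ‖a‖ ^ 2 = ρ - r2 := by
        have h := congrArg (fun x : ℂ => ‖x‖) ha
        rw [norm_pow, norm_mul, norm_neg, Complex.norm_real, Real.norm_eq_abs] at h
        rw [h, _root_.abs_of_nonneg (div_nonneg (by linarith) hρ.le), ← hρdef]
        field_simp
      have h1 : a * (starRingEnd ℂ) a = (ρ:ℂ) - (r2:ℂ) := by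
        rw [Complex.mul_conj, Complex.normSq_eq_norm_sq, habs]; push_cast; ring
      have h3 : (starRingEnd ℂ) a * w = -(ρ:ℂ) * a := by
        have h4 : a * ((ρ:ℂ) - (r2:ℂ)) * (ρ:ℂ)
            = -((ρ:ℂ) - (r2:ℂ)) * w * (starRingEnd ℂ) a := by
          have h5 := congrArg (· * (starRingEnd ℂ) a) ha
          have h6 : a ^ 2 * (starRingEnd ℂ) a = a * ((ρ:ℂ) - (r2:ℂ)) := by
            rw [pow_two, mul_assoc, h1]
          rw [h6] at h5
          rw [h5]; push_cast; field_simp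
        rcases eq_or_lt_of_le hA with he | hlt
        · have ha0 : a = 0 := by
            have h7 : a ^ 2 = 0 := by rw [ha, ← he]; simp
            exact pow_eq_zero_iff (two_ne_zero) |>.mp h7
          simp [ha0]
        · have hdne : ((ρ:ℂ) - (r2:ℂ)) ≠ 0 := by
            intro hcon
            have h8 : ρ = r2 := by exact_mod_cast sub_eq_zero.mp hcon
            linarith
          apply mul_left_cancel₀ hdne
          linear_combination h4
      have h3c : a * (starRingEnd ℂ) w = -(ρ:ℂ) * (starRingEnd ℂ) a := by
        have h9 := congrArg (starRingEnd ℂ) h3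
        simp only [_root_.map_mul, map_neg, Complex.conj_conj, Complex.conj_ofReal] at h9
        linear_combination h9
      have h2 : z * (starRingEnd ℂ) z = (r2:ℂ) := by
        rw [Complex.mul_conj, Complex.normSq_eq_norm_sq, hr2def]
      have hab : a * (starRingEnd ℂ) b = z * (starRingEnd ℂ) a := by
        rw [hbdef]
        simp only [_root_.map_mul, map_neg, map_div₀, Complex.conj_conj, Complex.conj_ofReal]
        field_simp
        linear_combination -z * h3c
      have habc : (starRingEnd ℂ) a * b = (starRingEnd ℂ) z * a := by
        have h10 := congrArg (starRingEnd ℂ) hab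
        simp only [_root_.map_mul, Complex.conj_conj] at h10
        linear_combination h10
      have habsb : ‖b‖ = ‖z‖ := by
        rw [hbdef]
        simp only [norm_mul, norm_neg, norm_div, Complex.norm_real, Real.norm_eq_abs,
          Complex.norm_conj, _root_.abs_of_pos hρ, ← hρdef]
        field_simp
      have hb2 : b * (starRingEnd ℂ) b = (r2:ℂ) := by
        rw [Complex.mul_conj, Complex.normSq_eq_norm_sq, habsb, hr2def]
      have E : ∀ u v : ℂ,
          (a*u + b*v) * (starRingEnd ℂ) (a*u + b*v)
            + (z*u - a*v) * (starRingEnd ℂ) (z*u - a*v)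
          = (ρ:ℂ) * (u * (starRingEnd ℂ) u + v * (starRingEnd ℂ) v) := by
        intro u v
        simp only [map_add, map_sub, _root_.map_mul]
        linear_combination (u * (starRingEnd ℂ) u + v * (starRingEnd ℂ) v) * h1
          + (u * (starRingEnd ℂ) u) * h2 + (v * (starRingEnd ℂ) v) * hb2
          + (u * (starRingEnd ℂ) v) * hab + ((starRingEnd ℂ) u * v) * habc
      have key : ∀ u v : ℂ, ‖a*u + b*v‖ ^ 2 + ‖z*u - a*v‖ ^ 2
          = ρ * (‖u‖ ^ 2 + ‖v‖ ^ 2) := by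
        intro u v
        have h := E u v
        rw [Complex.mul_conj, Complex.mul_conj, Complex.mul_conj, Complex.mul_conj] at h
        have h' : Complex.normSq (a*u+b*v) + Complex.normSq (z*u-a*v)
            = ρ * (Complex.normSq u + Complex.normSq v) := by exact_mod_cast h
        simpa [Complex.normSq_eq_norm_sq] using h'
      refine ⟨!![a, b; z, -a], ?_, ?_⟩
      · have hnorm : ‖Matrix.toEuclideanCLM (𝕜 := ℂ) (n := Fin 2) !![a, b; z, -a]‖
            ≤ Real.sqrt ρ := by
          refine pentablock_helper (Real.sqrt_nonneg ρ) fun u v => ?_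
          have e00 : !![a, b; z, -a] 0 0 = a := rfl
          have e01 : !![a, b; z, -a] 0 1 = b := rfl
          have e10 : !![a, b; z, -a] 1 0 = z := rfl
          have e11 : !![a, b; z, -a] 1 1 = -a := rfl
          rw [e00, e01, e10, e11]
          rw [Real.sq_sqrt hρ.le]
          have : z * u + -a * v = z * u - a * v := by ring
          rw [this, key u v]
        refine lt_of_le_of_lt hnorm ?_
        rw [show (1:ℝ) = Real.sqrt 1 by simp]
        exact Real.sqrt_lt_sqrt hρ.le hw
      · have hdet : Matrix.det !![a, b; z, -a] = w := by
          rw [Matrix.det_fin_two_of, hbdef]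
          have ha' : a ^ 2 * (ρ:ℂ) = -((ρ:ℂ) - (r2:ℂ)) * w := by
            rw [ha]; push_cast; field_simp
          field_simp
          linear_combination -ha' + w * h2
        have htr : Matrix.trace !![a, b; z, -a] = 0 := by
          rw [Matrix.trace_fin_two_of]; ring
        simp [hdet, htr]
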